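/- Let F = ZMod 31, A = F[X,Y], D the unique F-linear derivation of A with D(X) = X^31 and D(Y) = Y^31, and S = Algebra.adjoin F {X*Y, X^5 + Y^5}. Let C = F[Z₂, Z₁₂, Z₂₀, Z₃₀] and χ : C → A an F-algebra homomorphism with χ(Z₂) = X*Y and χ(Z₁₂), χ(Z₂₀), χ(Z₃₀) ∈ S homogeneous of total degrees 12, 20, 30 respectively. Suppose some g ∈ C satisfies χ(g) = D(X*Y) and the coefficient of Z₂·Z₃₀ in g is zero. Then for every h ∈ C with χ(h) = D(χ(Z₂₀)), the coefficient of the monomial Z₂₀·Z₃₀ in h is nonzero. -/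

import Mathlib

open MvPolynomial TrivSqZeroExt

abbrev F31 := ZMod 31
abbrev AA := MvPolynomial (Fin 2) F31
abbrev BB := Polynomial F31
abbrev DB := DualNumber BB

noncomputable def pr : AA →ₐ[F31] BB := aeval ![Polynomial.X, 0]
noncomputable def Xi : AA →ₐ[F31] DB := aeval ![inl Polynomial.X, DualNumber.eps]

lemma prX0 : pr (X 0) = Polynomial.X := by simp [pr]
lemma prX1 : pr (X 1) = 0 := by simp [pr]
lemma prC (a : F31) : pr (C a) = Polynomial.C a := by simp [pr, Polynomial.algebraMap_eq]
lemma XiX0 : Xi (X 0) = inl Polynomial.X := by simp [Xi]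
lemma XiX1 : Xi (X 1) = inr 1 := by
  unfold Xi
  rw [aeval_X]
  simp only [Matrix.cons_val_one, Matrix.head_cons]
  rfl

lemma deg2 (m : Fin 2 →₀ ℕ) : m.degree = m 0 + m 1 := by
  rw [Finsupp.degree_apply, show ∑ i ∈ m.support, m i = ∑ i : Fin 2, m i from
    Finset.sum_subset (Finset.subset_univ _) (fun i _ hi => Finsupp.notMem_support_iff.mp hi)]
  simp [Fin.sum_univ_two]

lemma pr_coeff (w : AA) (n : ℕ) : (pr w).coeff n = coeff (Finsupp.single 0 n) w := by
  conv_lhs => rw [w.as_sum]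
  rw [map_sum, Polynomial.finset_sum_coeff]
  rw [Finset.sum_eq_single (Finsupp.single 0 n)]
  · simp [pr, aeval_monomial, Finsupp.prod_pow, Fin.prod_univ_two, Polynomial.algebraMap_eq,
      Polynomial.coeff_C_mul, Polynomial.coeff_X_pow]
  · intro m _ hm
    simp only [pr, aeval_monomial, Finsupp.prod_pow, Fin.prod_univ_two, Polynomial.algebraMap_eq,
      Matrix.cons_val_zero, Matrix.cons_val_one, Matrix.head_cons]
    rcases Nat.eq_zero_or_pos (m 1) with h1 | h1
    · have h0 : m 0 ≠ n := by
        intro h0; apply hm; ext i; fin_cases i <;> simp [h0, Finsupp.single_apply, h1]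
      simp [h1, Polynomial.coeff_C_mul, Polynomial.coeff_X_pow, Ne.symm h0]
    · simp [zero_pow h1.ne']
  · intro h
    simp [MvPolynomial.notMem_support_iff.mp h]

lemma homog_pderiv {w : AA} {d : ℕ} (hw : w.IsHomogeneous (d+1)) (i : Fin 2) :
    (pderiv i w).IsHomogeneous d := by
  conv => rw [w.as_sum]
  rw [map_sum]
  apply IsHomogeneous.sum
  intro m hm
  rw [pderiv_monomial]
  rcases Nat.eq_zero_or_pos (m i) with h1 | h1
  · simp only [h1, Nat.cast_zero, mul_zero, map_zero]
    exact isHomogeneous_zero _ _ _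
  · apply isHomogeneous_monomial
    have hd : m.degree = d + 1 := by
      rw [Finsupp.degree_eq_weight_one]
      exact hw (MvPolynomial.mem_support_iff.mp hm)
    rw [deg2] at hd
    rw [deg2, Finsupp.tsub_apply, Finsupp.tsub_apply]
    fin_cases i <;> simp only [Finsupp.single_apply] at h1 ⊢ <;> simp at h1 ⊢ <;> omega

/-- coefficient of `pr w` away from degree `d` vanishes for `w` homogeneous of degree `d`. -/
lemma hcz {w : AA} {d : ℕ} (hw : w.IsHomogeneous d) {n : ℕ} (hn : n ≠ d) :
    (pr w).coeff n = 0 := by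
  rw [pr_coeff]
  apply hw.coeff_eq_zero
  rw [deg2]
  simp only [Finsupp.single_apply]
  simpa using hn

def Ok (r : ℕ) (q : BB) : Prop := ∀ n : ℕ, n % 5 ≠ r % 5 → q.coeff n = 0

lemma Ok.add {r : ℕ} {p q : BB} (hp : Ok r p) (hq : Ok r q) : Ok r (p + q) := fun n hn => by
  simp [Polynomial.coeff_add, hp n hn, hq n hn]

lemma Ok.mul {r s : ℕ} {p q : BB} (hp : Ok r p) (hq : Ok s q) : Ok (r + s) (p * q) := by
  intro n hn
  rw [Polynomial.coeff_mul]
  apply Finset.sum_eq_zero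
  rintro ⟨i, j⟩ hij
  rw [Finset.HasAntidiagonal.mem_antidiagonal] at hij
  by_cases hi : i % 5 = r % 5
  · by_cases hj : j % 5 = s % 5
    · exfalso; apply hn; omega
    · simp [hq j hj]
  · simp [hp i hi]

lemma pr_u : pr (X 0 * X 1) = 0 := by rw [map_mul, prX0, prX1, mul_zero]

lemma pr_du : pr (pderiv 1 (X 0 * X 1)) = Polynomial.X := by
  rw [pderiv_mul, pderiv_X_self, pderiv_X_of_ne (by decide)]
  simp [prX0, prX1]

lemma pr_v : pr (X 0 ^ 5 + X 1 ^ 5) = Polynomial.X ^ 5 := by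
  rw [map_add, map_pow, map_pow, prX0, prX1]
  simp

lemma pr_dv : pr (pderiv 1 (X 0 ^ 5 + X 1 ^ 5)) = 0 := by
  rw [map_add, pderiv_pow, pderiv_pow, pderiv_X_self, pderiv_X_of_ne (by decide)]
  simp [prX1]

lemma adjS : ∀ w ∈ Algebra.adjoin F31 {(X 0 * X 1 : AA), X 0 ^ 5 + X 1 ^ 5},
    Ok 0 (pr w) ∧ Ok 1 (pr (pderiv 1 w)) := by
  intro w hw
  induction hw using Algebra.adjoin_induction with
  | mem x hx =>
    rcases hx with rfl | rfl
    · refine ⟨?_, ?_⟩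
      · intro n _; rw [pr_u, Polynomial.coeff_zero]
      · intro n hn; rw [pr_du, Polynomial.coeff_X, if_neg (by omega)]
    · refine ⟨?_, ?_⟩
      · intro n hn; rw [pr_v, Polynomial.coeff_X_pow, if_neg (by omega)]
      · intro n _; rw [pr_dv, Polynomial.coeff_zero]
  | algebraMap r =>
    refine ⟨?_, ?_⟩
    · intro n hn
      rw [show (algebraMap F31 AA) r = C r from rfl, prC, Polynomial.coeff_C, if_neg (by omega)]
    · intro n _
      rw [show (algebraMap F31 AA) r = C r from rfl, pderiv_C, map_zero, Polynomial.coeff_zero]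
  | add x y hx hy ihx ihy =>
    exact ⟨by rw [map_add]; exact ihx.1.add ihy.1,
      by rw [map_add, map_add]; exact ihx.2.add ihy.2⟩
  | mul x y hx hy ihx ihy =>
    refine ⟨?_, ?_⟩
    · rw [map_mul]; exact ihx.1.mul ihy.1
    · rw [pderiv_mul, map_add, map_mul, map_mul]
      have h1 : Ok 1 (pr (pderiv 1 x) * pr y) := by simpa using ihx.2.mul ihy.1
      have h2 : Ok 1 (pr x * pr (pderiv 1 y)) := by simpa using ihx.1.mul ihy.2
      exact h1.add h2

lemma picomm (w : AA) : pr (pderiv 0 w) = Polynomial.derivative (pr w) := by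
  induction w using MvPolynomial.induction_on with
  | C a => rw [pderiv_C, map_zero, prC, Polynomial.derivative_C]
  | add p q hp hq => rw [map_add, map_add, map_add, hp, hq, Polynomial.derivative_add]
  | mul_X p i hp =>
    fin_cases i
    · show pr (pderiv 0 (p * X 0)) = Polynomial.derivative (pr (p * X 0))
      rw [pderiv_mul, pderiv_X_self, mul_one, map_add, map_mul, prX0, hp, map_mul, prX0,
        Polynomial.derivative_mul, Polynomial.derivative_X, mul_one]
    · show pr (pderiv 0 (p * X 1)) = Polynomial.derivative (pr (p * X 1))
      rw [pderiv_mul, pderiv_X_of_ne (by decide), mul_zero, add_zero, map_mul, prX1, mul_zero,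
        map_mul, prX1, mul_zero, Polynomial.derivative_zero]

lemma key (w : AA) : (Xi w).fst = pr w ∧ (Xi w).snd = pr (pderiv 1 w) := by
  induction w using MvPolynomial.induction_on with
  | C a =>
    have hx : Xi (C a) = algebraMap F31 DB a := by simp [Xi]
    constructor
    · rw [hx, TrivSqZeroExt.algebraMap_eq_inl', fst_inl, prC, Polynomial.algebraMap_eq]
    · rw [pderiv_C, map_zero, hx, TrivSqZeroExt.algebraMap_eq_inl', snd_inl]
  | add p q hp hq =>
    constructor
    · rw [map_add, fst_add, hp.1, hq.1, map_add]
    · rw [map_add, snd_add, hp.2, hq.2, map_add, map_add]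
  | mul_X p i hp =>
    fin_cases i
    · show (Xi (p * X 0)).fst = pr (p * X 0) ∧ (Xi (p * X 0)).snd = pr (pderiv 1 (p * X 0))
      rw [map_mul, fst_mul, snd_mul, XiX0, fst_inl, snd_inl, hp.1, hp.2]
      constructor
      · rw [map_mul, prX0]
      · rw [pderiv_mul, pderiv_X_of_ne (by decide), mul_zero, map_add, map_zero, add_zero,
          map_mul, prX0, smul_zero, zero_add]
        exact op_smul_eq_mul _ _
    · show (Xi (p * X 1)).fst = pr (p * X 1) ∧ (Xi (p * X 1)).snd = pr (pderiv 1 (p * X 1))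
      rw [map_mul, fst_mul, snd_mul, XiX1, fst_inr, snd_inr, hp.1, hp.2]
      constructor
      · rw [map_mul, prX1, mul_zero]
      · rw [pderiv_mul, pderiv_X_self, mul_one, map_add, map_mul, prX1, mul_zero]
        simp [op_smul_eq_mul, smul_eq_mul]

lemma poly_eq {q : BB} {d : ℕ} (hq : ∀ n, n ≠ d → q.coeff n = 0) :
    q = Polynomial.C (q.coeff d) * Polynomial.X ^ d := by
  ext n
  by_cases hn : n = d
  · subst hn; simp [Polynomial.coeff_C_mul, Polynomial.coeff_X_pow]
  · simp [hq n hn, Polynomial.coeff_C_mul, Polynomial.coeff_X_pow, hn]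

lemma poly_eq_zero {q : BB} {d r : ℕ} (hok : Ok r q) (hq : ∀ n, n ≠ d → q.coeff n = 0)
    (h5 : d % 5 ≠ r % 5) : q = 0 := by
  ext n
  by_cases hn : n = d
  · subst hn; rw [hok n h5, Polynomial.coeff_zero]
  · rw [hq n hn, Polynomial.coeff_zero]

lemma aeval_expand {S : Type*} [CommRing S] [Algebra F31 S] (v : Fin 4 → S)
    (w : MvPolynomial (Fin 4) F31) :
    aeval v w = ∑ m ∈ w.support, algebraMap F31 S (coeff m w) *
      (v 0 ^ m 0 * v 1 ^ m 1 * v 2 ^ m 2 * v 3 ^ m 3) := by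
  conv_lhs => rw [w.as_sum]
  rw [map_sum]
  refine Finset.sum_congr rfl fun m _ => ?_
  rw [aeval_monomial, Finsupp.prod_pow, Fin.prod_univ_four]

lemma finsupp4_eq_iff (m w : Fin 4 →₀ ℕ) :
    m = w ↔ (m 0 = w 0 ∧ m 1 = w 1 ∧ m 2 = w 2 ∧ m 3 = w 3) := by
  constructor
  · rintro rfl; exact ⟨rfl, rfl, rfl, rfl⟩
  · rintro ⟨h0, h1, h2, h3⟩
    ext i; fin_cases i <;> assumption

lemma inrX_sq : ((inr Polynomial.X : DB)) ^ 2 = 0 := by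
  rw [sq, inr_mul_inr]

lemma inr1_pow31 : ((inr 1 : DB)) ^ 31 = 0 := by
  have h2 : ((inr 1 : DB)) ^ 2 = 0 := by rw [sq, inr_mul_inr]
  calc ((inr 1 : DB)) ^ 31 = ((inr 1) ^ 2) * (inr 1) ^ 29 := by rw [← pow_add]
  _ = 0 := by rw [h2, zero_mul]

set_option maxHeartbeats 1000000 in
lemma snd_term31 (c b e r : F31) (a b1 k l : ℕ)
    (h1 : ¬(a = 1 ∧ b1 = 0 ∧ k = 0 ∧ l = 1))
    (h2 : ¬(a = 0 ∧ b1 = 1 ∧ k = 1 ∧ l = 0)) :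
    ((algebraMap F31 DB c *
      ((inr Polynomial.X : DB) ^ a * (inr (Polynomial.C b * Polynomial.X ^ 11) : DB) ^ b1 *
       (inl (Polynomial.C e * Polynomial.X ^ 20) : DB) ^ k *
       (inl (Polynomial.C r * Polynomial.X ^ 30) : DB) ^ l)).snd).coeff 31 = 0 := by
  have halg : algebraMap F31 DB c = inl (Polynomial.C c) := by
    rw [TrivSqZeroExt.algebraMap_eq_inl', Polynomial.algebraMap_eq]
  have hkl : ((inl (Polynomial.C e * Polynomial.X ^ 20) : DB) ^ k *
      (inl (Polynomial.C r * Polynomial.X ^ 30) : DB) ^ l)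
      = inl (Polynomial.C (e ^ k * r ^ l) * Polynomial.X ^ (20 * k + 30 * l)) := by
    rw [inl_pow, inl_pow, inl_mul_inl]
    congr 1
    rw [mul_pow, mul_pow, ← pow_mul, ← pow_mul, ← map_pow, ← map_pow, pow_add, map_mul]
    ring
  rcases a with _ | _ | a2
  · rcases b1 with _ | _ | b2
    · rw [pow_zero, pow_zero, one_mul, one_mul, hkl, halg, inl_mul_inl, snd_inl,
        Polynomial.coeff_zero]
    · simp only [zero_add, pow_one, pow_zero, one_mul]
      rw [mul_assoc, hkl, halg]
      rw [inr_mul_inl, inl_mul_inr, snd_inr, op_smul_eq_mul, smul_eq_mul]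
      rw [show Polynomial.C c * (Polynomial.C b * Polynomial.X ^ 11 * (Polynomial.C (e ^ k * r ^ l) *
          Polynomial.X ^ (20 * k + 30 * l))) =
        Polynomial.C (c * (b * (e ^ k * r ^ l))) * Polynomial.X ^ (11 + (20 * k + 30 * l)) by
          simp [map_mul, pow_add]; ring]
      rw [Polynomial.coeff_C_mul, Polynomial.coeff_X_pow, if_neg (by omega), mul_zero]
    · have h0 : (inr (Polynomial.C b * Polynomial.X ^ 11) : DB) ^ (b2+2) = 0 := by
        rw [pow_add, sq, inr_mul_inr, mul_zero]
      rw [pow_zero, one_mul, h0, zero_mul, zero_mul, mul_zero, snd_zero, Polynomial.coeff_zero]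
  · rcases b1 with _ | b2
    · simp only [zero_add, pow_one, pow_zero, mul_one]
      rw [mul_assoc, hkl, halg]
      rw [inr_mul_inl, inl_mul_inr, snd_inr, op_smul_eq_mul, smul_eq_mul]
      rw [show Polynomial.C c * (Polynomial.X * (Polynomial.C (e ^ k * r ^ l) *
          Polynomial.X ^ (20 * k + 30 * l))) =
        Polynomial.C (c * (e ^ k * r ^ l)) * Polynomial.X ^ (1 + (20 * k + 30 * l)) by
          simp [map_mul, pow_add]; ring]
      rw [Polynomial.coeff_C_mul, Polynomial.coeff_X_pow, if_neg (by omega), mul_zero]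
    · have h0 : (inr Polynomial.X : DB) * (inr (Polynomial.C b * Polynomial.X ^ 11) : DB) ^ (b2+1)
          = 0 := by
        rw [pow_succ', ← mul_assoc, inr_mul_inr, zero_mul]
      simp only [zero_add, pow_one]
      rw [h0, zero_mul, zero_mul, mul_zero, snd_zero, Polynomial.coeff_zero]
  · have h0 : (inr Polynomial.X : DB) ^ (a2 + 1 + 1) = 0 := by
      rw [pow_succ, pow_succ, mul_assoc, inr_mul_inr, mul_zero]
    rw [h0, zero_mul, zero_mul, zero_mul, mul_zero, snd_zero, Polynomial.coeff_zero]


lemma coeff_term50 (c e r : F31) (a b1 k l : ℕ) (h : ¬(a = 0 ∧ b1 = 0 ∧ k = 1 ∧ l = 1)) :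
    ((algebraMap F31 BB c) * ((0:BB) ^ a * (0:BB) ^ b1 *
      (Polynomial.C e * Polynomial.X ^ 20) ^ k *
      (Polynomial.C r * Polynomial.X ^ 30) ^ l)).coeff 50 = 0 := by
  rcases a with _ | a2
  · rcases b1 with _ | b2
    · simp only [pow_zero, one_mul]
      rw [Polynomial.algebraMap_eq]
      rw [show (Polynomial.C e * Polynomial.X ^ 20) ^ k * (Polynomial.C r * Polynomial.X ^ 30) ^ l
          = Polynomial.C (e ^ k * r ^ l) * Polynomial.X ^ (20 * k + 30 * l) from by
        rw [mul_pow, mul_pow, ← pow_mul, ← pow_mul, ← map_pow, ← map_pow, pow_add, map_mul]; ring]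
      rw [← mul_assoc, ← map_mul, Polynomial.coeff_C_mul, Polynomial.coeff_X_pow,
        if_neg (by omega), mul_zero]
    · rw [zero_pow (Nat.succ_ne_zero b2)]
      simp
  · rw [zero_pow (Nat.succ_ne_zero a2)]
    simp

lemma zne01 : (0 : F31) ≠ 1 := by decide
lemma zne20 : (20 : F31) ≠ 0 := by decide

set_option maxHeartbeats 2000000 in
theorem stmt9
    (D : Derivation (ZMod 31) (MvPolynomial (Fin 2) (ZMod 31)) (MvPolynomial (Fin 2) (ZMod 31)))
    (hDX : D (X 0) = X 0 ^ 31) (hDY : D (X 1) = X 1 ^ 31)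
    (χ : MvPolynomial (Fin 4) (ZMod 31) →ₐ[ZMod 31] MvPolynomial (Fin 2) (ZMod 31))
    (h2 : χ (X 0) = X 0 * X 1)
    (h12 : χ (X 1) ∈ Algebra.adjoin (ZMod 31) {X 0 * X 1, X 0 ^ 5 + X 1 ^ 5} ∧
      (χ (X 1)).IsHomogeneous 12)
    (h20 : χ (X 2) ∈ Algebra.adjoin (ZMod 31) {X 0 * X 1, X 0 ^ 5 + X 1 ^ 5} ∧
      (χ (X 2)).IsHomogeneous 20)
    (h30 : χ (X 3) ∈ Algebra.adjoin (ZMod 31) {X 0 * X 1, X 0 ^ 5 + X 1 ^ 5} ∧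
      (χ (X 3)).IsHomogeneous 30)
    (g : MvPolynomial (Fin 4) (ZMod 31)) (hg : χ g = D (X 0 * X 1))
    (hzero : coeff (Finsupp.single (0 : Fin 4) 1 + Finsupp.single 3 1) g = 0)
    (h : MvPolynomial (Fin 4) (ZMod 31)) (hh : χ h = D (χ (X 2))) :
    coeff (Finsupp.single (2 : Fin 4) 1 + Finsupp.single 3 1) h ≠ 0 := by
  haveI : Fact (Nat.Prime 31) := ⟨by norm_num⟩
  intro hcontra
  obtain ⟨m12, hom12⟩ := h12
  obtain ⟨m20, hom20⟩ := h20
  obtain ⟨m30, hom30⟩ := h30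
  obtain ⟨ok12, ok12'⟩ := adjS _ m12
  obtain ⟨ok20, ok20'⟩ := adjS _ m20
  obtain ⟨ok30, ok30'⟩ := adjS _ m30
  -- closed forms under pr
  have e12 : pr (χ (X 1)) = 0 :=
    poly_eq_zero ok12 (fun n hn => hcz hom12 hn) (by norm_num)
  set β : F31 := (pr (pderiv 1 (χ (X 1)))).coeff 11 with hβdef
  have e12' : pr (pderiv 1 (χ (X 1))) = Polynomial.C β * Polynomial.X ^ 11 :=
    poly_eq (fun n hn => hcz (homog_pderiv (d := 11) hom12 1) hn)
  set ε : F31 := (pr (χ (X 2))).coeff 20 with hεdef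
  have e20 : pr (χ (X 2)) = Polynomial.C ε * Polynomial.X ^ 20 :=
    poly_eq (fun n hn => hcz hom20 hn)
  have e20' : pr (pderiv 1 (χ (X 2))) = 0 :=
    poly_eq_zero ok20' (fun n hn => hcz (homog_pderiv (d := 19) hom20 1) hn) (by norm_num)
  set ρ : F31 := (pr (χ (X 3))).coeff 30 with hρdef
  have e30 : pr (χ (X 3)) = Polynomial.C ρ * Polynomial.X ^ 30 :=
    poly_eq (fun n hn => hcz hom30 hn)
  have e30' : pr (pderiv 1 (χ (X 3))) = 0 :=
    poly_eq_zero ok30' (fun n hn => hcz (homog_pderiv (d := 29) hom30 1) hn) (by norm_num)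
  -- Xi closed forms
  have X0v : Xi (χ (X 0)) = inr Polynomial.X := by
    apply TrivSqZeroExt.ext
    · rw [(key _).1, h2, pr_u, fst_inr]
    · rw [(key _).2, h2, pr_du, snd_inr]
  have X1v : Xi (χ (X 1)) = inr (Polynomial.C β * Polynomial.X ^ 11) := by
    apply TrivSqZeroExt.ext
    · rw [(key _).1, e12, fst_inr]
    · rw [(key _).2, e12', snd_inr]
  have X2v : Xi (χ (X 2)) = inl (Polynomial.C ε * Polynomial.X ^ 20) := by
    apply TrivSqZeroExt.ext
    · rw [(key _).1, e20, fst_inl]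
    · rw [(key _).2, e20', snd_inl]
  have X3v : Xi (χ (X 3)) = inl (Polynomial.C ρ * Polynomial.X ^ 30) := by
    apply TrivSqZeroExt.ext
    · rw [(key _).1, e30, fst_inl]
    · rw [(key _).2, e30', snd_inl]
  -- the derivation formula
  have hD : ∀ w : AA, D w = X 0 ^ 31 * pderiv 0 w + X 1 ^ 31 * pderiv 1 w := by
    have hext : D = (X 0 ^ 31 : AA) • (pderiv 0 : Derivation F31 AA AA) +
        (X 1 ^ 31 : AA) • (pderiv 1 : Derivation F31 AA AA) := by
      apply MvPolynomial.derivation_ext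
      intro i
      fin_cases i
      · show D (X 0) = ((X 0 ^ 31 : AA) • (pderiv 0 : Derivation F31 AA AA) +
            (X 1 ^ 31 : AA) • (pderiv 1 : Derivation F31 AA AA)) (X 0)
        rw [hDX, Derivation.add_apply, Derivation.smul_apply, Derivation.smul_apply,
          pderiv_X_self, pderiv_X_of_ne (by decide), smul_zero, add_zero, smul_eq_mul, mul_one]
      · show D (X 1) = ((X 0 ^ 31 : AA) • (pderiv 0 : Derivation F31 AA AA) +
            (X 1 ^ 31 : AA) • (pderiv 1 : Derivation F31 AA AA)) (X 1)
        rw [hDY, Derivation.add_apply, Derivation.smul_apply, Derivation.smul_apply,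
          pderiv_X_self, pderiv_X_of_ne (by decide), smul_zero, zero_add, smul_eq_mul, mul_one]
    intro w
    rw [hext, Derivation.add_apply, Derivation.smul_apply, Derivation.smul_apply,
      smul_eq_mul, smul_eq_mul]
  -- composite algebra hom through Xi
  have hXc : Xi.comp χ = aeval ![inr Polynomial.X, inr (Polynomial.C β * Polynomial.X ^ 11),
      inl (Polynomial.C ε * Polynomial.X ^ 20), inl (Polynomial.C ρ * Polynomial.X ^ 30)] := by
    apply MvPolynomial.algHom_ext
    intro i
    fin_cases i
    · show (Xi.comp χ) (X 0) = _
      rw [AlgHom.comp_apply, aeval_X, X0v]; rfl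
    · show (Xi.comp χ) (X 1) = _
      rw [AlgHom.comp_apply, aeval_X, X1v]; rfl
    · show (Xi.comp χ) (X 2) = _
      rw [AlgHom.comp_apply, aeval_X, X2v]; rfl
    · show (Xi.comp χ) (X 3) = _
      rw [AlgHom.comp_apply, aeval_X, X3v]; rfl
  -- step 1: cβε = 1
  have expand1 : Xi (χ g) = ∑ m ∈ g.support, algebraMap F31 DB (coeff m g) *
      ((inr Polynomial.X : DB) ^ m 0 * (inr (Polynomial.C β * Polynomial.X ^ 11) : DB) ^ m 1 *
       (inl (Polynomial.C ε * Polynomial.X ^ 20) : DB) ^ m 2 *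
       (inl (Polynomial.C ρ * Polynomial.X ^ 30) : DB) ^ m 3) := by
    rw [show Xi (χ g) = (Xi.comp χ) g from rfl, hXc]
    exact aeval_expand _ g
  have hstep1 : coeff (Finsupp.single (1 : Fin 4) 1 + Finsupp.single 2 1) g * (β * ε) = 1 := by
    have hlhs : ((Xi (χ g)).snd).coeff 31
        = coeff (Finsupp.single (1 : Fin 4) 1 + Finsupp.single 2 1) g * (β * ε) := by
      rw [expand1, snd_sum, Polynomial.finset_sum_coeff]
      refine Eq.trans (Finset.sum_eq_single
        (Finsupp.single (1 : Fin 4) 1 + Finsupp.single 2 1) ?_ ?_) ?_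
      · intro m _ hne
        by_cases hsp : m = Finsupp.single (0 : Fin 4) 1 + Finsupp.single 3 1
        · rw [hsp, hzero, map_zero, zero_mul, snd_zero, Polynomial.coeff_zero]
        · refine snd_term31 _ _ _ _ _ _ _ _ ?_ ?_
          · intro ⟨q0, q1, q2, q3⟩
            apply hsp
            rw [finsupp4_eq_iff]
            refine ⟨?_, ?_, ?_, ?_⟩ <;>
              simp [Finsupp.add_apply, Finsupp.single_apply, q0, q1, q2, q3]
          · intro ⟨q0, q1, q2, q3⟩
            apply hne
            rw [finsupp4_eq_iff]
            refine ⟨?_, ?_, ?_, ?_⟩ <;>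
              simp [Finsupp.add_apply, Finsupp.single_apply, q0, q1, q2, q3]
      · intro hns
        rw [MvPolynomial.notMem_support_iff.mp hns, map_zero, zero_mul, snd_zero,
          Polynomial.coeff_zero]
      · have v0 : ((Finsupp.single (1 : Fin 4) 1 + Finsupp.single 2 1 : Fin 4 →₀ ℕ)) 0 = 0 := by
          simp [Finsupp.add_apply, Finsupp.single_apply]
        have v1 : ((Finsupp.single (1 : Fin 4) 1 + Finsupp.single 2 1 : Fin 4 →₀ ℕ)) 1 = 1 := by
          simp [Finsupp.add_apply, Finsupp.single_apply]
        have v2 : ((Finsupp.single (1 : Fin 4) 1 + Finsupp.single 2 1 : Fin 4 →₀ ℕ)) 2 = 1 := by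
          simp [Finsupp.add_apply, Finsupp.single_apply]
        have v3 : ((Finsupp.single (1 : Fin 4) 1 + Finsupp.single 2 1 : Fin 4 →₀ ℕ)) 3 = 0 := by
          simp [Finsupp.add_apply, Finsupp.single_apply]
        rw [v0, v1, v2, v3, pow_zero, pow_one, pow_one, pow_zero, one_mul, mul_one,
          TrivSqZeroExt.algebraMap_eq_inl', Polynomial.algebraMap_eq,
          inr_mul_inl, inl_mul_inr, snd_inr, op_smul_eq_mul, smul_eq_mul]
        rw [show Polynomial.C (coeff (Finsupp.single (1 : Fin 4) 1 + Finsupp.single 2 1) g) *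
            (Polynomial.C β * Polynomial.X ^ 11 * (Polynomial.C ε * Polynomial.X ^ 20)) =
          Polynomial.C (coeff (Finsupp.single (1 : Fin 4) 1 + Finsupp.single 2 1) g * (β * ε)) *
            Polynomial.X ^ 31 from by simp [map_mul]; ring]
        rw [Polynomial.coeff_C_mul, Polynomial.coeff_X_pow, if_pos rfl, mul_one]
    have hrhs : ((Xi (D (X 0 * X 1))).snd).coeff 31 = 1 := by
      have hDu : D (X 0 * X 1) = X 0 * X 1 ^ 31 + X 1 * X 0 ^ 31 := by
        rw [D.leibniz, hDX, hDY, smul_eq_mul, smul_eq_mul]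
      rw [hDu, map_add, map_mul, map_mul, map_pow, map_pow, XiX0, XiX1, inr1_pow31, mul_zero,
        zero_add, inl_pow, inr_mul_inl, snd_inr, op_smul_eq_mul, one_mul,
        Polynomial.coeff_X_pow, if_pos rfl]
    rw [← hlhs, hg, hrhs]
  have hεne : ε ≠ 0 := by
    intro h0
    rw [h0, mul_zero, mul_zero] at hstep1
    exact zne01 hstep1
  -- step 2
  have hpc : pr.comp χ = aeval ![0, 0, Polynomial.C ε * Polynomial.X ^ 20,
      Polynomial.C ρ * Polynomial.X ^ 30] := by
    apply MvPolynomial.algHom_ext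
    intro i
    fin_cases i
    · show (pr.comp χ) (X 0) = _
      rw [AlgHom.comp_apply, aeval_X, h2, pr_u]; rfl
    · show (pr.comp χ) (X 1) = _
      rw [AlgHom.comp_apply, aeval_X, e12]; rfl
    · show (pr.comp χ) (X 2) = _
      rw [AlgHom.comp_apply, aeval_X, e20]; rfl
    · show (pr.comp χ) (X 3) = _
      rw [AlgHom.comp_apply, aeval_X, e30]; rfl
  have expand2 : pr (χ h) = ∑ m ∈ h.support, algebraMap F31 BB (coeff m h) *
      ((0:BB) ^ m 0 * (0:BB) ^ m 1 * (Polynomial.C ε * Polynomial.X ^ 20) ^ m 2 *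
       (Polynomial.C ρ * Polynomial.X ^ 30) ^ m 3) := by
    rw [show pr (χ h) = (pr.comp χ) h from rfl, hpc]
    exact aeval_expand _ h
  have hL : (pr (χ h)).coeff 50 = 0 := by
    rw [expand2, Polynomial.finset_sum_coeff]
    apply Finset.sum_eq_zero
    intro m _
    by_cases hsp : m = Finsupp.single (2 : Fin 4) 1 + Finsupp.single 3 1
    · rw [hsp, hcontra, map_zero, zero_mul, Polynomial.coeff_zero]
    · refine coeff_term50 _ _ _ _ _ _ _ ?_
      intro ⟨q0, q1, q2, q3⟩
      apply hsp
      rw [finsupp4_eq_iff]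
      refine ⟨?_, ?_, ?_, ?_⟩ <;>
        simp [Finsupp.add_apply, Finsupp.single_apply, q0, q1, q2, q3]
  have hR : (pr (D (χ (X 2)))).coeff 50 = 20 * ε := by
    rw [hD (χ (X 2)), map_add, map_mul, map_mul, map_pow, map_pow, prX0, prX1, picomm, e20, e20',
      mul_zero, add_zero, Polynomial.derivative_C_mul_X_pow]
    rw [show (Polynomial.X : BB) ^ 31 * (Polynomial.C (ε * ((20 : ℕ) : F31)) *
        Polynomial.X ^ (20 - 1)) = Polynomial.C (20 * ε) * Polynomial.X ^ 50 from by
      rw [map_mul, map_mul, Nat.cast_ofNat]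
      ring]
    rw [Polynomial.coeff_C_mul, Polynomial.coeff_X_pow, if_pos rfl, mul_one]
  rw [hh, hR] at hL
  rcases mul_eq_zero.mp hL with h20z | hez
  · exact absurd h20z zne20
  · exact hεne hez
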